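/- The Hamiltonian density h(v,u;a) := -(a/2)·u·v + a·√Θ - (a/2)·v·log((v+√Θ)/(v-√Θ)), with Θ = v² - 4e^u, satisfies the wave-type equation ∂²h/∂u² = e^u · ∂²h/∂v² on the domain where Θ > 0 and v > √Θ. -/

import Mathlib

open Real

noncomputable def hamFn (a v u : ℝ) : ℝ :=
  -(a / 2) * u * v + a * Real.sqrt (v ^ 2 - 4 * Real.exp u) -
    (a / 2) * v *
      Real.log ((v + Real.sqrt (v ^ 2 - 4 * Real.exp u)) /
        (v - Real.sqrt (v ^ 2 - 4 * Real.exp u)))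

lemma hamFn_hasDerivAt_u (a v u : ℝ) (hΘ : 0 < v ^ 2 - 4 * Real.exp u)
    (hv : Real.sqrt (v ^ 2 - 4 * Real.exp u) < v) :
    HasDerivAt (fun u' => hamFn a v u')
      (a / 2 * (Real.sqrt (v ^ 2 - 4 * Real.exp u) - v)) u := by
  set s := Real.sqrt (v ^ 2 - 4 * Real.exp u) with hsdef
  have hs0 : 0 < s := Real.sqrt_pos.mpr hΘ
  have hsq : s ^ 2 = v ^ 2 - 4 * Real.exp u := Real.sq_sqrt hΘ.le
  have hvs : 0 < v - s := by linarith
  have hvs' : 0 < v + s := by linarith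
  have hΘ' : HasDerivAt (fun u' => v ^ 2 - 4 * Real.exp u') (-(4 * Real.exp u)) u := by
    simpa using ((Real.hasDerivAt_exp u).const_mul 4).const_sub (v ^ 2)
  have hS : HasDerivAt (fun u' => Real.sqrt (v ^ 2 - 4 * Real.exp u'))
      (1 / (2 * s) * (-(4 * Real.exp u))) u :=
    (Real.hasDerivAt_sqrt hΘ.ne').comp u hΘ'
  have hf : HasDerivAt (fun u' => (v + Real.sqrt (v ^ 2 - 4 * Real.exp u')) /
      (v - Real.sqrt (v ^ 2 - 4 * Real.exp u')))
      (((1 / (2 * s) * (-(4 * Real.exp u))) * (v - s) -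
        (v + s) * (-(1 / (2 * s) * (-(4 * Real.exp u))))) / (v - s) ^ 2) u :=
    (hS.const_add v).div (hS.const_sub v) hvs.ne'
  have hlog : HasDerivAt (fun u' => Real.log ((v + Real.sqrt (v ^ 2 - 4 * Real.exp u')) /
      (v - Real.sqrt (v ^ 2 - 4 * Real.exp u'))))
      ((((1 / (2 * s) * (-(4 * Real.exp u))) * (v - s) -
        (v + s) * (-(1 / (2 * s) * (-(4 * Real.exp u))))) / (v - s) ^ 2) /
        ((v + s) / (v - s))) u :=
    hf.log (by positivity)
  have h1 : HasDerivAt (fun u' => -(a / 2) * u' * v) (-(a / 2) * v) u := by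
    simpa using ((hasDerivAt_id u).const_mul (-(a / 2))).mul_const v
  have := (h1.add (hS.const_mul a)).sub (hlog.const_mul ((a / 2) * v))
  refine this.congr_deriv ?_
  rw [show Real.exp u = (v ^ 2 - s ^ 2) / 4 by linarith]
  field_simp [hs0.ne', hvs.ne', hvs'.ne']
  ring

lemma hamFn_hasDerivAt_v (a v u : ℝ) (hΘ : 0 < v ^ 2 - 4 * Real.exp u)
    (hv : Real.sqrt (v ^ 2 - 4 * Real.exp u) < v) :
    HasDerivAt (fun v'' => hamFn a v'' u)
      (-(a / 2) * u - (a / 2) * Real.log ((v + Real.sqrt (v ^ 2 - 4 * Real.exp u)) /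
        (v - Real.sqrt (v ^ 2 - 4 * Real.exp u)))) v := by
  set s := Real.sqrt (v ^ 2 - 4 * Real.exp u) with hsdef
  have hs0 : 0 < s := Real.sqrt_pos.mpr hΘ
  have hsq : s ^ 2 = v ^ 2 - 4 * Real.exp u := Real.sq_sqrt hΘ.le
  have hvs : 0 < v - s := by linarith
  have hvs' : 0 < v + s := by linarith
  have hΘ' : HasDerivAt (fun v' => v' ^ 2 - 4 * Real.exp u) (2 * v) v := by
    simpa using (hasDerivAt_pow 2 v).sub_const (4 * Real.exp u)
  have hS : HasDerivAt (fun v' => Real.sqrt (v' ^ 2 - 4 * Real.exp u))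
      (1 / (2 * s) * (2 * v)) v :=
    (Real.hasDerivAt_sqrt hΘ.ne').comp v hΘ'
  have hf : HasDerivAt (fun v' => (v' + Real.sqrt (v' ^ 2 - 4 * Real.exp u)) /
      (v' - Real.sqrt (v' ^ 2 - 4 * Real.exp u)))
      (((1 + 1 / (2 * s) * (2 * v)) * (v - s) -
        (v + s) * (1 - 1 / (2 * s) * (2 * v))) / (v - s) ^ 2) v :=
    ((hasDerivAt_id v).add hS).div ((hasDerivAt_id v).sub hS) hvs.ne'
  have hlog : HasDerivAt (fun v' => Real.log ((v' + Real.sqrt (v' ^ 2 - 4 * Real.exp u)) /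
      (v' - Real.sqrt (v' ^ 2 - 4 * Real.exp u))))
      ((((1 + 1 / (2 * s) * (2 * v)) * (v - s) -
        (v + s) * (1 - 1 / (2 * s) * (2 * v))) / (v - s) ^ 2) / ((v + s) / (v - s))) v :=
    hf.log (by positivity)
  have h1 : HasDerivAt (fun v' => -(a / 2) * u * v') (-(a / 2) * u) v := by
    simpa using (hasDerivAt_id v).const_mul (-(a / 2) * u)
  have h3 : HasDerivAt (fun v' => (a / 2) * v' *
      Real.log ((v' + Real.sqrt (v' ^ 2 - 4 * Real.exp u)) /
        (v' - Real.sqrt (v' ^ 2 - 4 * Real.exp u))))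
      ((a / 2) * Real.log ((v + s) / (v - s)) +
        ((a / 2) * v) * ((((1 + 1 / (2 * s) * (2 * v)) * (v - s) -
          (v + s) * (1 - 1 / (2 * s) * (2 * v))) / (v - s) ^ 2) / ((v + s) / (v - s)))) v := by
    have := (((hasDerivAt_id v).const_mul (a / 2)).mul hlog)
    exact this.congr_deriv (by simp only [id, mul_one, ← hsdef])
  have := (h1.add (hS.const_mul a)).sub h3
  refine this.congr_deriv ?_
  field_simp [hs0.ne', hvs.ne', hvs'.ne']
  ring

lemma deriv2_u (a v u : ℝ) (hΘ : 0 < v ^ 2 - 4 * Real.exp u) :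
    HasDerivAt (fun u' => a / 2 * (Real.sqrt (v ^ 2 - 4 * Real.exp u') - v))
      (-(a * Real.exp u / Real.sqrt (v ^ 2 - 4 * Real.exp u))) u := by
  set s := Real.sqrt (v ^ 2 - 4 * Real.exp u) with hsdef
  have hs0 : 0 < s := Real.sqrt_pos.mpr hΘ
  have hΘ' : HasDerivAt (fun u' => v ^ 2 - 4 * Real.exp u') (-(4 * Real.exp u)) u := by
    simpa using ((Real.hasDerivAt_exp u).const_mul 4).const_sub (v ^ 2)
  have hS : HasDerivAt (fun u' => Real.sqrt (v ^ 2 - 4 * Real.exp u'))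
      (1 / (2 * s) * (-(4 * Real.exp u))) u :=
    (Real.hasDerivAt_sqrt hΘ.ne').comp u hΘ'
  have := (hS.sub_const v).const_mul (a / 2)
  refine this.congr_deriv ?_
  field_simp
  ring

lemma deriv2_v (a v u : ℝ) (hΘ : 0 < v ^ 2 - 4 * Real.exp u)
    (hv : Real.sqrt (v ^ 2 - 4 * Real.exp u) < v) :
    HasDerivAt (fun v' => -(a / 2) * u - (a / 2) *
        Real.log ((v' + Real.sqrt (v' ^ 2 - 4 * Real.exp u)) /
          (v' - Real.sqrt (v' ^ 2 - 4 * Real.exp u))))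
      (-(a / Real.sqrt (v ^ 2 - 4 * Real.exp u))) v := by
  set s := Real.sqrt (v ^ 2 - 4 * Real.exp u) with hsdef
  have hs0 : 0 < s := Real.sqrt_pos.mpr hΘ
  have hvs : 0 < v - s := by linarith
  have hvs' : 0 < v + s := by linarith
  have hΘ' : HasDerivAt (fun v' => v' ^ 2 - 4 * Real.exp u) (2 * v) v := by
    simpa using (hasDerivAt_pow 2 v).sub_const (4 * Real.exp u)
  have hS : HasDerivAt (fun v' => Real.sqrt (v' ^ 2 - 4 * Real.exp u))
      (1 / (2 * s) * (2 * v)) v :=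
    (Real.hasDerivAt_sqrt hΘ.ne').comp v hΘ'
  have hf : HasDerivAt (fun v' => (v' + Real.sqrt (v' ^ 2 - 4 * Real.exp u)) /
      (v' - Real.sqrt (v' ^ 2 - 4 * Real.exp u)))
      (((1 + 1 / (2 * s) * (2 * v)) * (v - s) -
        (v + s) * (1 - 1 / (2 * s) * (2 * v))) / (v - s) ^ 2) v :=
    ((hasDerivAt_id v).add hS).div ((hasDerivAt_id v).sub hS) hvs.ne'
  have hlog : HasDerivAt (fun v' => Real.log ((v' + Real.sqrt (v' ^ 2 - 4 * Real.exp u)) /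
      (v' - Real.sqrt (v' ^ 2 - 4 * Real.exp u))))
      ((((1 + 1 / (2 * s) * (2 * v)) * (v - s) -
        (v + s) * (1 - 1 / (2 * s) * (2 * v))) / (v - s) ^ 2) / ((v + s) / (v - s))) v :=
    hf.log (by positivity)
  have := (hlog.const_mul (a / 2)).const_sub (-(a / 2) * u)
  refine this.congr_deriv ?_
  field_simp [hs0.ne', hvs.ne', hvs'.ne']
  ring

/-- On the domain where `Θ = v² - 4eᵘ > 0` and `v > √Θ`, the Hamiltonian density
satisfies the wave-type equation `∂²h/∂u² = eᵘ ∂²h/∂v²`. -/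
theorem ham_wave_equation (a v u : ℝ) (hΘ : 0 < v ^ 2 - 4 * Real.exp u)
    (hv : Real.sqrt (v ^ 2 - 4 * Real.exp u) < v) :
    deriv (fun u' => deriv (fun u'' => hamFn a v u'') u') u =
      Real.exp u * deriv (fun v' => deriv (fun v'' => hamFn a v'' u) v') v := by
  set s := Real.sqrt (v ^ 2 - 4 * Real.exp u) with hsdef
  have hs0 : 0 < s := Real.sqrt_pos.mpr hΘ
  -- u side
  have hcu : Continuous fun u' => v ^ 2 - 4 * Real.exp u' :=
    continuous_const.sub (continuous_const.mul Real.continuous_exp)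
  have h1 : ∀ᶠ u' in nhds u, 0 < v ^ 2 - 4 * Real.exp u' :=
    Filter.Tendsto.eventually_lt tendsto_const_nhds hcu.continuousAt hΘ
  have h2 : ∀ᶠ u' in nhds u, Real.sqrt (v ^ 2 - 4 * Real.exp u') < v :=
    Filter.Tendsto.eventually_lt (Real.continuous_sqrt.comp hcu).continuousAt tendsto_const_nhds hv
  have hEu : (fun u' => deriv (fun u'' => hamFn a v u'') u') =ᶠ[nhds u]
      (fun u' => a / 2 * (Real.sqrt (v ^ 2 - 4 * Real.exp u') - v)) := by
    filter_upwards [h1, h2] with u' h1' h2'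
    exact (hamFn_hasDerivAt_u a v u' h1' h2').deriv
  -- v side
  have hcv : Continuous fun v' => v' ^ 2 - 4 * Real.exp u :=
    (continuous_pow 2).sub continuous_const
  have h3 : ∀ᶠ v' in nhds v, 0 < v' ^ 2 - 4 * Real.exp u :=
    Filter.Tendsto.eventually_lt tendsto_const_nhds hcv.continuousAt hΘ
  have h4 : ∀ᶠ v' in nhds v, Real.sqrt (v' ^ 2 - 4 * Real.exp u) < v' :=
    Filter.Tendsto.eventually_lt (Real.continuous_sqrt.comp hcv).continuousAt continuous_id.continuousAt hv
  have hEv : (fun v' => deriv (fun v'' => hamFn a v'' u) v') =ᶠ[nhds v]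
      (fun v' => -(a / 2) * u - (a / 2) *
        Real.log ((v' + Real.sqrt (v' ^ 2 - 4 * Real.exp u)) /
          (v' - Real.sqrt (v' ^ 2 - 4 * Real.exp u)))) := by
    filter_upwards [h3, h4] with v' h3' h4'
    exact (hamFn_hasDerivAt_v a v' u h3' h4').deriv
  rw [hEu.deriv_eq, hEv.deriv_eq, (deriv2_u a v u hΘ).deriv, (deriv2_v a v u hΘ hv).deriv]
  ring
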